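/- Let $\gamma > 0$, $\rho > 0$, $\theta > 0$ and suppose a matrix $\Gamma \in \mathbb{R}^{n\times n}$ is $\gamma$-negative definite, and that $x \in \mathbb{R}^n$, $n, m \in \mathbb{R}^n$ satisfy $|m|\,|x - m| - |m|^2 \le -\rho$ and $|m|\,|x-m| \le \theta$ (where $m$ plays the role of $\nabla h(x)^{-\star}n$ and $x$ of $h(x)$). If $\|\Gamma\| \le \gamma + c$ for some $c \ge 0$, then $\langle \Gamma x, m \rangle \le -\rho\gamma + \theta c$. -/
import Mathlib

open RealInnerProductSpace

/-- Key estimate in Proposition 4.8: if `Γ` is `γ`-negative definite with `‖Γ‖ ≤ γ + c`,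
and `|m||x - m| - |m|² ≤ -ρ`, `|m||x - m| ≤ θ`, then `⟪Γ x, m⟫ ≤ -ργ + θc`. -/
theorem inner_Gamma_le
    (n : ℕ) (Γ : EuclideanSpace ℝ (Fin n) →L[ℝ] EuclideanSpace ℝ (Fin n))
    (γ ρ θ c : ℝ) (hγ : 0 < γ) (hρ : 0 < ρ) (hθ : 0 < θ) (hc : 0 ≤ c)
    (hΓ : ∀ y : EuclideanSpace ℝ (Fin n), ⟪Γ y, y⟫ ≤ -γ * ‖y‖ ^ 2)
    (hΓnorm : ‖Γ‖ ≤ γ + c)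
    (x m : EuclideanSpace ℝ (Fin n))
    (h1 : ‖m‖ * ‖x - m‖ - ‖m‖ ^ 2 ≤ -ρ)
    (h2 : ‖m‖ * ‖x - m‖ ≤ θ) :
    ⟪Γ x, m⟫ ≤ -ρ * γ + θ * c := by
  have hsplit : ⟪Γ x, m⟫ = ⟪Γ m, m⟫ + ⟪Γ (x - m), m⟫ := by
    rw [← inner_add_left, ← map_add, add_sub_cancel]
  have hcs : ⟪Γ (x - m), m⟫ ≤ (γ + c) * (‖x - m‖ * ‖m‖) := by
    calc ⟪Γ (x - m), m⟫ ≤ ‖Γ (x - m)‖ * ‖m‖ := real_inner_le_norm _ _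
      _ ≤ (‖Γ‖ * ‖x - m‖) * ‖m‖ := by
          gcongr
          exact Γ.le_opNorm _
      _ ≤ (γ + c) * (‖x - m‖ * ‖m‖) := by
          rw [mul_assoc]
          exact mul_le_mul_of_nonneg_right hΓnorm (by positivity)
  have h3 := hΓ m
  nlinarith [norm_nonneg m, norm_nonneg (x - m), sq_nonneg (‖m‖ - ‖x - m‖)]
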